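/- Let G be a finite simple graph with n vertices, none of them isolated. If G satisfies MSC, then for every integer k ≥ 1, every basic k-cover of G has norm kn/2 (i.e., twice the norm of every basic k-cover equals kn). -/

import Mathlib

variable {V : Type*} [Fintype V] [DecidableEq V]

/-- For `k ∈ ℕ`, a `k`-cover of `G` is a function from the vertices of `G` to `ℕ` that is
not identically zero and whose values at the two endpoints of any edge sum to at least `k`. -/
def IsCover (G : SimpleGraph V) (k : ℕ) (a : V → ℕ) : Prop :=
  a ≠ 0 ∧ ∀ i j : V, G.Adj i j → k ≤ a i + a j

/-- A `k`-cover is basic if it is not the pointwise sum of a `k`-cover and a `0`-cover. -/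
def IsBasicCover (G : SimpleGraph V) (k : ℕ) (a : V → ℕ) : Prop :=
  IsCover G k a ∧ ¬ ∃ b c : V → ℕ, IsCover G k b ∧ IsCover G 0 c ∧ a = b + c

/-- `G` is a domain if for all `s, t` with `s + t ≥ 1`, the pointwise sum of any `s` basic
`1`-covers and any `t` basic `2`-covers of `G` is a basic `(s + 2t)`-cover. -/
def IsGraphDomain (G : SimpleGraph V) : Prop :=
  ∀ s t : ℕ, 1 ≤ s + t → ∀ f : Fin s → V → ℕ, ∀ g : Fin t → V → ℕ,
    (∀ p, IsBasicCover G 1 (f p)) → (∀ q, IsBasicCover G 2 (g q)) →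
    IsBasicCover G (s + 2 * t) ((∑ p, f p) + (∑ q, g q))

/-- `G` is unmixed if all basic `1`-covers of `G` have the same norm. -/
def IsUnmixed (G : SimpleGraph V) : Prop :=
  ∀ a b : V → ℕ, IsBasicCover G 1 a → IsBasicCover G 1 b → ∑ v, a v = ∑ v, b v

/-- `G` satisfies WSC if it has at least one edge and every non-isolated vertex `i` has a
neighbour `j` such that any neighbour of `i` is adjacent to any neighbour of `j`. -/
def SatisfiesWSC (G : SimpleGraph V) : Prop :=
  (∃ i j : V, G.Adj i j) ∧
    ∀ i : V, (∃ x, G.Adj i x) →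
      ∃ j : V, G.Adj i j ∧ ∀ i' j' : V, G.Adj i i' → G.Adj j j' → G.Adj i' j'

/-- `G` satisfies SC if for every edge `{i, j}`, every neighbour `i'` of `i` and every
neighbour `j'` of `j`, one has `i' ≠ j'` and `{i', j'}` is an edge. -/
def SatisfiesSC (G : SimpleGraph V) : Prop :=
  ∀ i j i' j' : V, G.Adj i j → G.Adj i i' → G.Adj j j' → i' ≠ j' ∧ G.Adj i' j'

/-- `G` satisfies MSC if the set of non-isolated vertices of `G` is nonempty and carries a
perfect matching `M` (a matching of `G` whose vertex set is exactly the set of non-isolated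
vertices) such that for every edge `{i, j}` of `M`, every neighbour `i'` of `i` in `G` and
every neighbour `j'` of `j` in `G`, `{i', j'}` is an edge of `G`. -/
def SatisfiesMSC (G : SimpleGraph V) : Prop :=
  ∃ M : G.Subgraph, M.verts = {v : V | ∃ w, G.Adj v w} ∧ M.verts.Nonempty ∧
    M.IsMatching ∧
    ∀ i j : V, M.Adj i j → ∀ i' j' : V, G.Adj i i' → G.Adj j j' → G.Adj i' j'

/-- The graph `G^{0-1}`: its edges are the edges `{i, j}` of `G` such that `a i + a j = 1`
for every basic `1`-cover `a` of `G`.  (Its vertex set is interpreted as the set of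
non-isolated vertices of `G`; here it is defined on all of `V`, and the vertices of `G`
that are isolated stay isolated, so they can be excluded explicitly when needed.) -/
def ZeroOne (G : SimpleGraph V) : SimpleGraph V where
  Adj i j := G.Adj i j ∧ ∀ a : V → ℕ, IsBasicCover G 1 a → a i + a j = 1
  symm := by
    refine ⟨?_⟩
    intro i j h
    exact ⟨h.1.symm, fun a ha => by rw [add_comm]; exact h.2 a ha⟩
  loopless := by
    refine ⟨?_⟩
    intro i h
    exact G.irrefl h.1

/-- `A ∪ B` is a vertex bipartition of the connected component `C` of `H`, and the edges of
`H` inside `C` are exactly the pairs `{x, y}` with `x ∈ A` and `y ∈ B` (so the component is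
a complete bipartite graph on `A ∪ B`). -/
def IsCompBipartition (H : SimpleGraph V) (C : H.ConnectedComponent) (A B : Set V) : Prop :=
  A ∪ B = C.supp ∧ Disjoint A B ∧
    ∀ x ∈ C.supp, ∀ y ∈ C.supp,
      (H.Adj x y ↔ (x ∈ A ∧ y ∈ B) ∨ (x ∈ B ∧ y ∈ A))

/-- The graph `G⁺` obtained from `G` by attaching a pendant vertex to each vertex of `G`:
`Sum.inl v` is the original vertex `v`, and `Sum.inr v` is the pendant attached to `v`. -/
def GPlus (G : SimpleGraph V) : SimpleGraph (V ⊕ V) where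
  Adj x y :=
    match x, y with
    | Sum.inl u, Sum.inl v => G.Adj u v
    | Sum.inl u, Sum.inr v => u = v
    | Sum.inr u, Sum.inl v => u = v
    | Sum.inr _, Sum.inr _ => False
  symm := by
    refine ⟨?_⟩
    rintro (u | u) (v | v) h
    · exact h.symm
    · exact h.symm
    · exact h.symm
    · exact h.elim
  loopless := by
    refine ⟨?_⟩
    rintro (u | u) h
    · exact G.irrefl h
    · exact h
/-- If `G` has no isolated vertices and satisfies MSC, then for every `k ≥ 1`
every basic `k`-cover of `G` has norm `k * n / 2` (where `n` is the number of vertices),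
i.e. twice its norm equals `k * n`. -/
theorem msc_basic_covers_norm (G : SimpleGraph V) (hiso : ∀ v : V, ∃ w, G.Adj v w)
    (hmsc : SatisfiesMSC G) :
    ∀ k : ℕ, 1 ≤ k → ∀ a : V → ℕ, IsBasicCover G k a →
      2 * (∑ v, a v) = k * Fintype.card V := by
  classical
  obtain ⟨M, hverts, -, hmatch, hprop⟩ := hmsc
  have hmem : ∀ v : V, v ∈ M.verts := by
    intro v; rw [hverts]; exact hiso v
  intro k hk a ha
  -- matching partner function
  let f : V → V := fun v => (hmatch (hmem v)).choose
  have hf1 : ∀ v, M.Adj v (f v) := fun v => (hmatch (hmem v)).choose_spec.1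
  have hf2 : ∀ v w, M.Adj v w → w = f v := fun v w h => (hmatch (hmem v)).choose_spec.2 w h
  have hkey : ∀ i j, M.Adj i j → a i + a j = k := by
    intro i j hij
    have hGij : G.Adj i j := M.adj_sub hij
    have hge : k ≤ a i + a j := ha.1.2 i j hGij
    by_contra hne
    have hgt : k + 1 ≤ a i + a j := by omega
    have hdecomp : ∀ v : V, 1 ≤ a v → (∀ w, G.Adj v w → k + 1 ≤ a v + a w) → False := by
      intro v hv1 hv2
      apply ha.2
      set b : V → ℕ := fun w => if w = v then a v - 1 else a w with hbdef
      set c : V → ℕ := fun w => if w = v then 1 else 0 with hcdef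
      have hbcov : ∀ x y : V, G.Adj x y → k ≤ b x + b y := by
        intro x y hxy
        have h1 := ha.1.2 x y hxy
        by_cases hx : x = v
        · subst hx
          have hyy : y ≠ x := hxy.ne'
          have h2 := hv2 y hxy
          simp only [hbdef, if_pos rfl, if_neg hyy]
          omega
        · by_cases hy : y = v
          · subst hy
            have h2 := hv2 x hxy.symm
            simp only [hbdef, if_neg hx, if_pos rfl]
            omega
          · simp only [hbdef, if_neg hx, if_neg hy]
            exact h1
      refine ⟨b, c, ⟨?_, hbcov⟩, ⟨?_, fun _ _ _ => Nat.zero_le _⟩, ?_⟩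
      · intro h0
        have h1 := hbcov i j hGij
        rw [h0] at h1
        simp at h1
        omega
      · intro h0
        have h1 := congrFun h0 v
        simp [hcdef] at h1
      · funext w
        show a w = b w + c w
        by_cases hw : w = v
        · subst hw
          simp only [hbdef, hcdef, if_pos rfl]
          omega
        · simp only [hbdef, hcdef, if_neg hw, Pi.add_apply]
          omega
    by_cases hi0 : a i = 0
    · exact hdecomp j (by omega) (fun w hw => by
        have := ha.1.2 j w hw
        omega)
    · by_cases hj0 : a j = 0
      · exact hdecomp i (by omega) (fun w hw => by
          have := ha.1.2 i w hw
          omega)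
      · by_cases hiall : ∀ w, G.Adj i w → k + 1 ≤ a i + a w
        · exact hdecomp i (by omega) hiall
        · push_neg at hiall
          obtain ⟨i', hii', hi'⟩ := hiall
          by_cases hjall : ∀ w, G.Adj j w → k + 1 ≤ a j + a w
          · exact hdecomp j (by omega) hjall
          · push_neg at hjall
            obtain ⟨j', hjj', hj'⟩ := hjall
            have h3 : k ≤ a i' + a j' := ha.1.2 i' j' (hprop i j hij i' j' hii' hjj')
            omega
  have hinv : Function.Involutive f := by
    intro v
    exact (hf2 (f v) v (hf1 v).symm).symm
  have hsum : ∑ v, a (f v) = ∑ v, a v :=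
    Fintype.sum_bijective f hinv.bijective (fun v => a (f v)) a (fun v => rfl)
  calc 2 * ∑ v, a v = ∑ v, a v + ∑ v, a (f v) := by rw [hsum]; ring
    _ = ∑ v, (a v + a (f v)) := (Finset.sum_add_distrib).symm
    _ = ∑ _v : V, k := Finset.sum_congr rfl (fun v _ => hkey v (f v) (hf1 v))
    _ = k * Fintype.card V := by simp [Finset.sum_const, Finset.card_univ, mul_comm]
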